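/- arXiv:2506.12804 — 8 statements merged into one kernel-verified Lean document; each statement's English description precedes it below -/
import Mathlib

section
/- Let F be a fuzzy propositional formula, built from atoms in a signature σ, numeric constants in [0,1], a fuzzy negation, fuzzy conjunctions, fuzzy disjunctions, and fuzzy implications. Let I and J be fuzzy interpretations (functions σ → [0,1]) such that J(p) ≤ I(p) for all atoms p. Then the truth value of the reduct F^I under J is at most the truth value of F under I: υ_J(F^I) ≤ υ_I(F), where the reduct is defined by: p^I = p for atoms and constants; (¬G)^I is the constant υ_I(¬G); (G⊙H)^I = (G^I ⊙ H^I) ⊗_m υ_I(G⊙H) for binary connectives ⊙, with ⊗_m(x,y)=min(x,y). -/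
open unitInterval
open scoped Classical

noncomputable section

def IsFuzzyNeg (n : I → I) : Prop :=
  (∀ ⦃x y : I⦄, x ≤ y → n y ≤ n x) ∧ n 0 = 1 ∧ n 1 = 0

def IsFuzzyConj (c : I → I → I) : Prop :=
  (∀ ⦃a b a' b' : I⦄, a ≤ a' → b ≤ b' → c a b ≤ c a' b') ∧
  (∀ x y, c x y = c y x) ∧ (∀ x y z, c (c x y) z = c x (c y z)) ∧ (∀ x, c 1 x = x)

def IsFuzzyDisj (d : I → I → I) : Prop :=
  (∀ ⦃a b a' b' : I⦄, a ≤ a' → b ≤ b' → d a b ≤ d a' b') ∧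
  (∀ x y, d x y = d y x) ∧ (∀ x y z, d (d x y) z = d x (d y z)) ∧ (∀ x, d 0 x = x)

def IsFuzzyImpl (i : I → I → I) : Prop :=
  (∀ (c : I) ⦃a b : I⦄, a ≤ b → i b c ≤ i a c) ∧
  (∀ (a : I) ⦃b c : I⦄, b ≤ c → i a b ≤ i a c) ∧
  (∀ x, i 1 x = x) ∧ i 0 0 = 1

inductive FF (A : Type) where
  | atom : A → FF A
  | const : I → FF A
  | neg : (I → I) → FF A → FF A
  | conj : (I → I → I) → FF A → FF A → FF A
  | disj : (I → I → I) → FF A → FF A → FF A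
  | impl : (I → I → I) → FF A → FF A → FF A

def WellFormed {A : Type} : FF A → Prop
  | .atom _ => True
  | .const _ => True
  | .neg n G => IsFuzzyNeg n ∧ WellFormed G
  | .conj c G H => IsFuzzyConj c ∧ WellFormed G ∧ WellFormed H
  | .disj d G H => IsFuzzyDisj d ∧ WellFormed G ∧ WellFormed H
  | .impl i G H => IsFuzzyImpl i ∧ WellFormed G ∧ WellFormed H

def eval {A : Type} (Iv : A → I) : FF A → I
  | .atom p => Iv p
  | .const c => c
  | .neg n G => n (eval Iv G)
  | .conj c G H => c (eval Iv G) (eval Iv H)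
  | .disj d G H => d (eval Iv G) (eval Iv H)
  | .impl i G H => i (eval Iv G) (eval Iv H)

def reduct {A : Type} (Iv : A → I) : FF A → FF A
  | .atom p => .atom p
  | .const c => .const c
  | .neg n G => .const (eval Iv (.neg n G))
  | .conj c G H => .conj (fun a b => min a b)
      (.conj c (reduct Iv G) (reduct Iv H)) (.const (eval Iv (.conj c G H)))
  | .disj d G H => .conj (fun a b => min a b)
      (.disj d (reduct Iv G) (reduct Iv H)) (.const (eval Iv (.disj d G H)))
  | .impl i G H => .conj (fun a b => min a b)
      (.impl i (reduct Iv G) (reduct Iv H)) (.const (eval Iv (.impl i G H)))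

def ltp {A : Type} (p : Set A) (J Iv : A → I) : Prop :=
  (∀ a ∉ p, J a = Iv a) ∧ (∀ a ∈ p, J a ≤ Iv a) ∧ J ≠ Iv

def yStable {A : Type} (y : I) (F : FF A) (Iv : A → I) (p : Set A) : Prop :=
  y ≤ eval Iv F ∧ ¬ ∃ J, ltp p J Iv ∧ y ≤ eval J (reduct Iv F)

def Stable1 {A : Type} (F : FF A) (Iv : A → I) (p : Set A) : Prop :=
  eval Iv F = 1 ∧ ¬ ∃ J, ltp p J Iv ∧ eval J (reduct Iv F) = 1

def lukDisj (x y : I) : I :=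
  ⟨min (x.1 + y.1) 1, le_min (add_nonneg x.2.1 y.2.1) zero_le_one, min_le_right _ _⟩

def rImpl (x y : I) : I := if x ≤ y then 1 else y

theorem eval_reduct_le {A : Type} (F : FF A) (hF : WellFormed F)
    (Iv J : A → I) (hJI : ∀ a, J a ≤ Iv a) :
    eval J (reduct Iv F) ≤ eval Iv F := by
  induction F with
  | atom p => exact hJI p
  | const c => exact le_refl _
  | neg n G ih => exact le_refl _
  | conj c G H ihG ihH => exact min_le_right _ _
  | disj d G H ihG ihH => exact min_le_right _ _
  | impl i G H ihG ihH => exact min_le_right _ _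

end
end

section
/- For any fuzzy propositional formula F and any fuzzy interpretation I, the truth value of F under I equals the truth value of the reduct F^I under I: υ_I(F) = υ_I(F^I). Consequently, I satisfies F (i.e., υ_I(F)=1) if and only if I satisfies F^I. -/
open unitInterval
open scoped Classical

noncomputable section

theorem eval_reduct_self {A : Type} (F : FF A) (hF : WellFormed F) (Iv : A → I) :
    eval Iv (reduct Iv F) = eval Iv F ∧
      (eval Iv F = 1 ↔ eval Iv (reduct Iv F) = 1) := by
  have h : eval Iv (reduct Iv F) = eval Iv F := by
    induction F with
    | atom p => rfl
    | const c => rfl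
    | neg n G ih => rfl
    | conj c G H ihG ihH =>
        simp [reduct, eval, ihG hF.2.1, ihH hF.2.2]
    | disj d G H ihG ihH =>
        simp [reduct, eval, ihG hF.2.1, ihH hF.2.2]
    | impl i G H ihG ihH =>
        simp [reduct, eval, ihG hF.2.1, ihH hF.2.2]
  exact ⟨h, by rw [h]⟩

end
end

section
/- Let → be a fuzzy implication satisfying →(x,y) = 1 iff y ≥ x. For any fuzzy formula F, an interpretation I is a y-stable model of F relative to a set p of atoms if and only if I is a 1-stable model of the formula y → F relative to p. (I is a y-stable model of F relative to p if υ_I(F) ≥ y and there is no interpretation J with J <^p I and υ_J(F^I) ≥ y, where J <^p I means J agrees with I outside p, J(q) ≤ I(q) for q ∈ p, and J ≠ I.) -/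
open unitInterval
open scoped Classical

noncomputable section

theorem yStable_iff_oneStable {A : Type} (i : I → I → I) (hi : IsFuzzyImpl i)
    (hiff : ∀ x y : I, i x y = 1 ↔ x ≤ y)
    (F : FF A) (hF : WellFormed F) (Iv : A → I) (p : Set A) (y : I) :
    yStable y F Iv p ↔ yStable 1 (.impl i (.const y) F) Iv p := by
  have h1 : ∀ x : I, (1:I) ≤ x ↔ x = 1 := fun x =>
    ⟨fun h => le_antisymm le_one' h, fun h => h ▸ le_rfl⟩
  have hi' : ∀ a b : I, (1:I) ≤ i a b ↔ a ≤ b := fun a b => (h1 _).trans (hiff a b)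
  simp only [yStable, eval, reduct, le_min_iff, hi']
  constructor
  · rintro ⟨hy, hn⟩
    refine ⟨hy, fun ⟨J, hJ, hJ1, _⟩ => hn ⟨J, hJ, hJ1⟩⟩
  · rintro ⟨hy, hn⟩
    exact ⟨hy, fun ⟨J, hJ, hJ1⟩ => hn ⟨J, hJ, hJ1, hy⟩⟩

end
end

section
/- For any fuzzy formulas F and G and fuzzy conjunction ⊗, an interpretation I is a (1-)stable model of F ⊗ ¬G relative to a set p of atoms if and only if I is a stable model of F relative to p and υ_I(¬G) = 1. (Here I is a stable model of H relative to p if υ_I(H)=1 and no J <^p I satisfies υ_J(H^I)=1.) -/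
open unitInterval
open scoped Classical

noncomputable section

lemma conj_eq_one {c : I → I → I} (hc : IsFuzzyConj c) {x y : I} :
    c x y = 1 ↔ x = 1 ∧ y = 1 := by
  obtain ⟨mono, comm, _, unit⟩ := hc
  constructor
  · intro h
    have hx : c x y ≤ x := le_of_le_of_eq (comm x y ▸ mono (le_one' : y ≤ 1) le_rfl) (unit x)
    have hy : c x y ≤ y := le_of_le_of_eq (mono (le_one' : x ≤ 1) le_rfl) (unit y)
    exact ⟨le_antisymm le_one' (h ▸ hx), le_antisymm le_one' (h ▸ hy)⟩
  · rintro ⟨rfl, rfl⟩; exact unit 1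

theorem stable_conj_constraint {A : Type} (c : I → I → I) (n : I → I)
    (hc : IsFuzzyConj c) (hn : IsFuzzyNeg n)
    (F G : FF A) (hF : WellFormed F) (hG : WellFormed G)
    (Iv : A → I) (p : Set A) :
    Stable1 (.conj c F (.neg n G)) Iv p ↔
      Stable1 F Iv p ∧ eval Iv (.neg n G) = 1 := by
  have hc1 : ∀ x : I, c x 1 = x := fun x => by rw [hc.2.1]; exact hc.2.2.2 x
  have key : ∀ J : A → I, eval Iv F = 1 → n (eval Iv G) = 1 →
      eval J (reduct Iv (.conj c F (.neg n G))) = eval J (reduct Iv F) := by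
    intro J hF1 hG1
    simp only [reduct, eval, hF1, hG1, hc1, min_eq_left le_one']
  constructor
  · rintro ⟨h1, h2⟩
    simp only [eval] at h1
    obtain ⟨hF1, hG1⟩ := (conj_eq_one hc).mp h1
    refine ⟨⟨hF1, ?_⟩, hG1⟩
    rintro ⟨J, hJ, hJ1⟩
    exact h2 ⟨J, hJ, by rw [key J hF1 hG1]; exact hJ1⟩
  · rintro ⟨⟨hF1, h2⟩, hG1⟩
    have hG1' : n (eval Iv G) = 1 := hG1
    refine ⟨?_, ?_⟩
    · simp only [eval, hF1, hG1', hc1]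
    · rintro ⟨J, hJ, hJ1⟩
      rw [key J hF1 hG1'] at hJ1
      exact h2 ⟨J, hJ, hJ1⟩

end
end

section
/- Let F be a classical propositional formula and F^fuzzy its fuzzy translation using the constant 0 for ⊥, 1 for ⊤, ¬_s(x)=1−x, min, max, and →_s(x,y)=max(1−x,y). For any fuzzy interpretation I, define defuz(I) to be the classical interpretation making an atom p true iff I(p)=1. Then: (i) if υ_I(F^fuzzy) = 1, then defuz(I) satisfies F; and (ii) if υ_I(F^fuzzy) = 0, then defuz(I) does not satisfy F. -/
open unitInterval
open scoped Classical

noncomputable section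

/-- Classical propositional formulas. -/
inductive PF (A : Type) where
  | bot : PF A
  | top : PF A
  | atom : A → PF A
  | neg : PF A → PF A
  | and : PF A → PF A → PF A
  | or : PF A → PF A → PF A
  | imp : PF A → PF A → PF A

def psat {A : Type} (X : A → Prop) : PF A → Prop
  | .bot => False
  | .top => True
  | .atom p => X p
  | .neg F => ¬ psat X F
  | .and F G => psat X F ∧ psat X G
  | .or F G => psat X F ∨ psat X G
  | .imp F G => psat X F → psat X G

/-- The fuzzy translation `F^fuzzy`: `⊥ ↦ 0`, `⊤ ↦ 1`, `¬ ↦ 1 - x`, `∧ ↦ min`,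
`∨ ↦ max`, `→ ↦ max (1 - x) y`. -/
def fuz {A : Type} : PF A → FF A
  | .bot => .const 0
  | .top => .const 1
  | .atom p => .atom p
  | .neg F => .neg unitInterval.symm (fuz F)
  | .and F G => .conj (fun a b => min a b) (fuz F) (fuz G)
  | .or F G => .disj (fun a b => max a b) (fuz F) (fuz G)
  | .imp F G => .impl (fun a b => max (unitInterval.symm a) b) (fuz F) (fuz G)

/-- `I^fuzzy`: true atoms map to 1, false atoms to 0. -/
def toFuzzy {A : Type} (X : A → Prop) : A → I := fun p => if X p then 1 else 0

lemma symm_eq_one' {x : I} : unitInterval.symm x = 1 ↔ x = 0 := by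
  constructor <;> intro h
  · have := congrArg unitInterval.symm h; simpa using this
  · simp [h]

lemma symm_eq_zero' {x : I} : unitInterval.symm x = 0 ↔ x = 1 := by
  constructor <;> intro h
  · have := congrArg unitInterval.symm h; simpa using this
  · simp [h]

lemma min_eq_one' {a b : I} : min a b = 1 ↔ a = 1 ∧ b = 1 := by
  constructor
  · intro h
    exact ⟨le_antisymm le_one' (h ▸ min_le_left a b),
           le_antisymm le_one' (h ▸ min_le_right a b)⟩
  · rintro ⟨rfl, rfl⟩; simp

lemma max_eq_zero' {a b : I} : max a b = 0 ↔ a = 0 ∧ b = 0 := by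
  constructor
  · intro h
    exact ⟨le_antisymm (h ▸ le_max_left a b) nonneg',
           le_antisymm (h ▸ le_max_right a b) nonneg'⟩
  · rintro ⟨rfl, rfl⟩; simp

lemma min_eq_zero' {a b : I} (h : min a b = 0) : a = 0 ∨ b = 0 := by
  rcases min_choice a b with hc | hc <;> [left; right] <;> rw [← hc, h]

lemma max_eq_one' {a b : I} (h : max a b = 1) : a = 1 ∨ b = 1 := by
  rcases max_choice a b with hc | hc <;> [left; right] <;> rw [← hc, h]

theorem defuz_models {A : Type} (F : PF A) (Iv : A → I) :
    (eval Iv (fuz F) = 1 → psat (fun p => Iv p = 1) F) ∧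
    (eval Iv (fuz F) = 0 → ¬ psat (fun p => Iv p = 1) F) := by
  induction F with
  | bot =>
    refine ⟨fun h => ?_, fun _ => by simp [psat]⟩
    exact absurd h (by norm_num [fuz, eval])
  | top =>
    refine ⟨fun _ => trivial, fun h => ?_⟩
    exact absurd h (by norm_num [fuz, eval])
  | atom p =>
    refine ⟨fun h => h, fun h hp => ?_⟩
    simp only [fuz, eval] at h
    simp only [psat] at hp
    rw [h] at hp; exact zero_ne_one hp
  | neg G ihG =>
    constructor
    · intro h
      have : eval Iv (fuz G) = 0 := symm_eq_one'.mp h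
      exact ihG.2 this
    · intro h hn
      have : eval Iv (fuz G) = 1 := symm_eq_zero'.mp h
      exact hn (ihG.1 this)
  | and G H ihG ihH =>
    constructor
    · intro h
      obtain ⟨h1, h2⟩ := min_eq_one'.mp h
      exact ⟨ihG.1 h1, ihH.1 h2⟩
    · intro h hs
      rcases min_eq_zero' h with h0 | h0
      · exact ihG.2 h0 hs.1
      · exact ihH.2 h0 hs.2
  | or G H ihG ihH =>
    constructor
    · intro h
      rcases max_eq_one' h with h1 | h1
      · exact Or.inl (ihG.1 h1)
      · exact Or.inr (ihH.1 h1)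
    · intro h hs
      obtain ⟨h1, h2⟩ := max_eq_zero'.mp h
      rcases hs with hs | hs
      · exact ihG.2 h1 hs
      · exact ihH.2 h2 hs
  | imp G H ihG ihH =>
    constructor
    · intro h hG
      rcases max_eq_one' h with h1 | h1
      · exact absurd hG (ihG.2 (symm_eq_one'.mp h1))
      · exact ihH.1 h1
    · intro h hs
      obtain ⟨h1, h2⟩ := max_eq_zero'.mp h
      exact ihH.2 h2 (hs (ihG.1 (symm_eq_zero'.mp h1)))

end
end

section
/- For any classical propositional formula F and any classical interpretation I, I is a Boolean stable model of F relative to a set p of atoms if and only if I^fuzzy is a fuzzy stable model of F^fuzzy relative to p, where F^fuzzy uses ¬_s(x)=1−x, min, max, and →_s(x,y)=max(1−x,y), and I^fuzzy maps true atoms to 1 and false atoms to 0. -/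
open unitInterval
open scoped Classical

noncomputable section

/-- The classical reduct `F^X`: every maximal subformula not satisfied by `X`
is replaced by `⊥`. -/
def preduct {A : Type} (X : A → Prop) : PF A → PF A
  | .bot => .bot
  | .top => .top
  | .atom p => if X p then .atom p else .bot
  | .neg F => if psat X F then .bot else .top
  | .and F G => if psat X (.and F G) then .and (preduct X F) (preduct X G) else .bot
  | .or F G => if psat X (.or F G) then .or (preduct X F) (preduct X G) else .bot
  | .imp F G => if psat X (.imp F G) then .imp (preduct X F) (preduct X G) else .bot

def pltp {A : Type} (p : Set A) (Y X : A → Prop) : Prop :=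
  (∀ a ∉ p, (Y a ↔ X a)) ∧ (∀ a ∈ p, Y a → X a) ∧ Y ≠ X

/-- Boolean stable model of `F` relative to `p`. -/
def PStable {A : Type} (F : PF A) (X : A → Prop) (p : Set A) : Prop :=
  psat X F ∧ ¬ ∃ Y, pltp p Y X ∧ psat Y (preduct X F)


lemma min1 (a b : I) : min a b = 1 ↔ a = 1 ∧ b = 1 := by
  rw [show (min a b = 1) ↔ (1 ≤ min a b) from ⟨fun h => h.ge, fun h => le_antisymm le_one' h⟩,
    le_min_iff]
  exact and_congr ⟨fun h => le_antisymm le_one' h, fun h => h.ge⟩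
    ⟨fun h => le_antisymm le_one' h, fun h => h.ge⟩

lemma max1 (a b : I) : max a b = 1 ↔ a = 1 ∨ b = 1 := by
  rw [show (max a b = 1) ↔ (1 ≤ max a b) from ⟨fun h => h.ge, fun h => le_antisymm le_one' h⟩,
    le_max_iff]
  exact or_congr ⟨fun h => le_antisymm le_one' h, fun h => h.ge⟩
    ⟨fun h => le_antisymm le_one' h, fun h => h.ge⟩

lemma min0 (a b : I) : min a b = 0 ↔ a = 0 ∨ b = 0 := by
  rw [show (min a b = 0) ↔ (min a b ≤ 0) from ⟨fun h => h.le, fun h => le_antisymm h nonneg'⟩,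
    min_le_iff]
  exact or_congr ⟨fun h => le_antisymm h nonneg', fun h => h.le⟩
    ⟨fun h => le_antisymm h nonneg', fun h => h.le⟩

lemma max0 (a b : I) : max a b = 0 ↔ a = 0 ∧ b = 0 := by
  rw [show (max a b = 0) ↔ (max a b ≤ 0) from ⟨fun h => h.le, fun h => le_antisymm h nonneg'⟩,
    max_le_iff]
  exact and_congr ⟨fun h => le_antisymm h nonneg', fun h => h.le⟩
    ⟨fun h => le_antisymm h nonneg', fun h => h.le⟩

lemma zero_ne_one_I : (0 : I) ≠ 1 := by
  intro h
  have := congrArg Subtype.val h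
  norm_num at this

lemma ite1 {c : Prop} [Decidable c] (h : (if c then (1:I) else 0) = 1) : c := by
  by_contra hc
  rw [if_neg hc] at h
  exact zero_ne_one_I h

lemma ite0 {c : Prop} [Decidable c] (h : (if c then (1:I) else 0) = 0) : ¬ c := by
  intro hc
  rw [if_pos hc] at h
  exact zero_ne_one_I h.symm

lemma evalfuz {A : Type} (X : A → Prop) :
    ∀ F : PF A, eval (toFuzzy X) (fuz F) = if psat X F then 1 else 0 := by
  intro F
  induction F with
  | bot => simp [fuz, eval, psat]
  | top => simp [fuz, eval, psat]
  | atom p =>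
      simp [fuz, eval, psat, toFuzzy]
      split_ifs <;> simp_all
  | neg G ih =>
      simp only [fuz, eval, psat, ih]
      split_ifs <;> simp_all
  | and G H ihG ihH =>
      simp only [fuz, eval, psat, ihG, ihH]
      split_ifs <;> simp_all
  | or G H ihG ihH =>
      simp only [fuz, eval, psat, ihG, ihH]
      split_ifs <;> simp_all
  | imp G H ihG ihH =>
      simp only [fuz, eval, psat, ihG, ihH]
      split_ifs <;> simp_all

lemma mem01_min {a b : I} (ha : a = 0 ∨ a = 1) (hb : b = 0 ∨ b = 1) :
    min a b = 0 ∨ min a b = 1 := by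
  rcases min_choice a b with h | h <;> rw [h] <;> assumption

lemma mem01_max {a b : I} (ha : a = 0 ∨ a = 1) (hb : b = 0 ∨ b = 1) :
    max a b = 0 ∨ max a b = 1 := by
  rcases max_choice a b with h | h <;> rw [h] <;> assumption

lemma mem01_symm {a : I} (ha : a = 0 ∨ a = 1) : σ a = 0 ∨ σ a = 1 := by
  rcases ha with rfl | rfl <;> simp

lemma mem01_ite {c : Prop} [Decidable c] : (if c then (1:I) else 0) = 0 ∨ (if c then (1:I) else 0) = 1 := by
  split_ifs <;> simp

lemma bool_valued {A : Type} (X Z : A → Prop) :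
    ∀ F : PF A, eval (toFuzzy Z) (reduct (toFuzzy X) (fuz F)) = 0 ∨
      eval (toFuzzy Z) (reduct (toFuzzy X) (fuz F)) = 1 := by
  intro F
  induction F with
  | bot => left; rfl
  | top => right; rfl
  | atom p =>
      simp only [fuz, reduct, eval, toFuzzy]
      exact mem01_ite
  | neg G ih =>
      simp only [fuz, reduct, eval, evalfuz X G]
      exact mem01_symm mem01_ite
  | and G H ihG ihH =>
      simp only [fuz, reduct, eval, evalfuz X G, evalfuz X H]
      exact mem01_min (mem01_min ihG ihH) (mem01_min mem01_ite mem01_ite)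
  | or G H ihG ihH =>
      simp only [fuz, reduct, eval, evalfuz X G, evalfuz X H]
      exact mem01_min (mem01_max ihG ihH) (mem01_max mem01_ite mem01_ite)
  | imp G H ihG ihH =>
      simp only [fuz, reduct, eval, evalfuz X G, evalfuz X H]
      exact mem01_min (mem01_max (mem01_symm ihG) ihH)
        (mem01_max (mem01_symm mem01_ite) mem01_ite)

lemma round_lemma {A : Type} (X : A → Prop) (J : A → I) (hJ : ∀ a, J a ≤ toFuzzy X a) :
    ∀ F : PF A,
      (eval J (reduct (toFuzzy X) (fuz F)) = 1 → psat (fun a => J a = 1) (preduct X F)) ∧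
      (eval J (reduct (toFuzzy X) (fuz F)) = 0 → ¬ psat (fun a => J a = 1) (preduct X F)) := by
  intro F
  induction F with
  | bot =>
      refine ⟨fun h => absurd h zero_ne_one_I, fun _ hps => ?_⟩
      exact hps
  | top => exact ⟨fun _ => trivial, fun h => absurd h.symm zero_ne_one_I⟩
  | atom p =>
      constructor
      · intro h
        have hx : X p := by
          by_contra hx
          have h0 : J p ≤ 0 := by simpa [toFuzzy, hx] using hJ p
          have : J p = 0 := le_antisymm h0 nonneg'
          exact zero_ne_one_I (this ▸ h)
        simp only [preduct]
        rw [if_pos hx]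
        exact h
      · intro h hps
        simp only [preduct] at hps
        by_cases hx : X p
        · rw [if_pos hx] at hps
          exact zero_ne_one_I (h ▸ hps)
        · rw [if_neg hx] at hps
          exact hps
  | neg G ihG =>
      simp only [fuz, reduct, eval, evalfuz X G]
      constructor
      · intro h
        have hx : ¬ psat X G := by
          intro hx
          rw [if_pos hx, unitInterval.symm_one] at h
          exact zero_ne_one_I h
        simp only [preduct]
        rw [if_neg hx]
        trivial
      · intro h hps
        simp only [preduct] at hps
        by_cases hx : psat X G
        · rw [if_pos hx] at hps
          exact hps
        · rw [if_neg hx, unitInterval.symm_zero] at h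
          exact zero_ne_one_I h.symm
  | and G H ihG ihH =>
      simp only [fuz, reduct, eval, evalfuz X G, evalfuz X H]
      constructor
      · intro h
        rw [min1, min1, min1] at h
        obtain ⟨⟨h1, h2⟩, h3, h4⟩ := h
        simp only [preduct]
        split_ifs with hx2
        · exact ⟨ihG.1 h1, ihH.1 h2⟩
        · exact absurd (⟨ite1 h3, ite1 h4⟩ : psat X G ∧ psat X H) hx2
      · intro h hps
        rw [min0, min0, min0] at h
        simp only [preduct] at hps
        split_ifs at hps with hx2
        · have hps' : psat (fun a => J a = 1) (preduct X G) ∧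
              psat (fun a => J a = 1) (preduct X H) := hps
          rcases h with (h1 | h1) | h1 | h1
          · exact ihG.2 h1 hps'.1
          · exact ihH.2 h1 hps'.2
          · exact ite0 h1 (show psat X G ∧ psat X H from hx2).1
          · exact ite0 h1 (show psat X G ∧ psat X H from hx2).2
        · exact hps
  | or G H ihG ihH =>
      simp only [fuz, reduct, eval, evalfuz X G, evalfuz X H]
      constructor
      · intro h
        rw [min1, max1, max1] at h
        obtain ⟨h1, h2⟩ := h
        simp only [preduct]
        split_ifs with hx2
        · rcases h1 with h1 | h1
          · exact Or.inl (ihG.1 h1)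
          · exact Or.inr (ihH.1 h1)
        · refine absurd (?_ : psat X G ∨ psat X H) hx2
          rcases h2 with h2 | h2
          · exact Or.inl (ite1 h2)
          · exact Or.inr (ite1 h2)
      · intro h hps
        rw [min0, max0, max0] at h
        simp only [preduct] at hps
        split_ifs at hps with hx2
        · have hps' : psat (fun a => J a = 1) (preduct X G) ∨
              psat (fun a => J a = 1) (preduct X H) := hps
          rcases h with ⟨h1, h2⟩ | ⟨h1, h2⟩
          · rcases hps' with hp | hp
            · exact ihG.2 h1 hp
            · exact ihH.2 h2 hp
          · have hng : ¬ psat X G := ite0 h1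
            have hnh : ¬ psat X H := ite0 h2
            rcases (show psat X G ∨ psat X H from hx2) with hx | hx
            · exact hng hx
            · exact hnh hx
        · exact hps
  | imp G H ihG ihH =>
      simp only [fuz, reduct, eval, evalfuz X G, evalfuz X H]
      constructor
      · intro h
        rw [min1, max1, max1] at h
        obtain ⟨h1, h2⟩ := h
        simp only [preduct]
        split_ifs with hx2
        · show psat (fun a => J a = 1) (preduct X G) → psat (fun a => J a = 1) (preduct X H)
          intro hg
          rcases h1 with h1 | h1
          · exact absurd hg (ihG.2 (unitInterval.symm_eq_one.mp h1))
          · exact ihH.1 h1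
        · refine absurd (?_ : psat X G → psat X H) hx2
          intro hg
          rcases h2 with h2 | h2
          · exact absurd hg (ite0 (unitInterval.symm_eq_one.mp h2))
          · exact ite1 h2
      · intro h hps
        rw [min0, max0, max0] at h
        simp only [preduct] at hps
        split_ifs at hps with hx2
        · have hps' : psat (fun a => J a = 1) (preduct X G) →
              psat (fun a => J a = 1) (preduct X H) := hps
          rcases h with ⟨h1, h2⟩ | ⟨h1, h2⟩
          · exact ihH.2 h2 (hps' (ihG.1 (unitInterval.symm_eq_zero.mp h1)))
          · exact ite0 h2 ((show psat X G → psat X H from hx2)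
              (ite1 (unitInterval.symm_eq_zero.mp h1)))
        · exact hps

lemma ltp_of_pltp {A : Type} {p : Set A} {Y X : A → Prop} (h : pltp p Y X) :
    ltp p (toFuzzy Y) (toFuzzy X) := by
  obtain ⟨h1, h2, h3⟩ := h
  refine ⟨fun a ha => ?_, fun a ha => ?_, fun heq => ?_⟩
  · by_cases hy : Y a
    · simp [toFuzzy, hy, (h1 a ha).mp hy]
    · have hx : ¬ X a := fun hx => hy ((h1 a ha).mpr hx)
      simp [toFuzzy, hy, hx]
  · by_cases hy : Y a
    · simp [toFuzzy, hy, h2 a ha hy]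
    · simp [toFuzzy, hy]
  · apply h3
    funext a
    have := congrFun heq a
    simp only [toFuzzy] at this
    by_cases hy : Y a <;> by_cases hx : X a <;>
      simp_all [zero_ne_one_I, zero_ne_one_I.symm]

lemma pltp_of_ltp {A : Type} {p : Set A} {J : A → I} {X : A → Prop}
    (h : ltp p J (toFuzzy X)) : pltp p (fun a => J a = 1) X := by
  obtain ⟨h1, h2, h3⟩ := h
  refine ⟨fun a ha => ?_, fun a ha hj => ?_, fun heq => ?_⟩
  · show J a = 1 ↔ X a
    rw [h1 a ha]
    by_cases hx : X a <;> simp [toFuzzy, hx, zero_ne_one_I]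
  · by_contra hx
    have hle : J a ≤ 0 := by simpa [toFuzzy, hx] using h2 a ha
    exact zero_ne_one_I ((le_antisymm hle nonneg') ▸ hj)
  · apply h3
    funext a
    have := congrFun heq a
    simp only [eq_iff_iff] at this
    by_cases hx : X a
    · simp only [hx, iff_true] at this
      simp [toFuzzy, hx, this]
    · simp only [hx, iff_false] at this
      have hle : J a ≤ toFuzzy X a := by
        by_cases hp : a ∈ p
        · exact h2 a hp
        · exact (h1 a hp).le
      simp only [toFuzzy, hx, if_false] at hle ⊢
      exact le_antisymm hle nonneg'

theorem boolean_stable_iff_fuzzy_stable {A : Type} (F : PF A) (X : A → Prop)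
    (p : Set A) :
    PStable F X p ↔ Stable1 (fuz F) (toFuzzy X) p := by
  constructor
  · rintro ⟨hsat, hns⟩
    refine ⟨by rw [evalfuz X F, if_pos hsat], ?_⟩
    rintro ⟨J, hltp, hred⟩
    have hJ : ∀ a, J a ≤ toFuzzy X a := by
      intro a
      by_cases hp : a ∈ p
      · exact hltp.2.1 a hp
      · exact (hltp.1 a hp).le
    exact hns ⟨fun a => J a = 1, pltp_of_ltp hltp, (round_lemma X J hJ F).1 hred⟩
  · rintro ⟨heval, hns⟩
    have hsat : psat X F := by
      by_contra h
      rw [evalfuz X F, if_neg h] at heval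
      exact zero_ne_one_I heval
    refine ⟨hsat, ?_⟩
    rintro ⟨Y, hpltp, hps⟩
    have hsub : ∀ a, Y a → X a := fun a ha => by
      by_cases hp : a ∈ p
      · exact hpltp.2.1 a hp ha
      · exact (hpltp.1 a hp).mp ha
    have hJ : ∀ a, toFuzzy Y a ≤ toFuzzy X a := by
      intro a
      by_cases hy : Y a
      · simp [toFuzzy, hy, hsub a hy]
      · simp [toFuzzy, hy]
    have hYeq : (fun a => toFuzzy Y a = 1) = Y := by
      funext a
      by_cases hy : Y a <;> simp [toFuzzy, hy, zero_ne_one_I]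
    have hone : eval (toFuzzy Y) (reduct (toFuzzy X) (fuz F)) = 1 := by
      rcases bool_valued X Y F with h0 | h1
      · have := (round_lemma X (toFuzzy Y) hJ F).2 h0
        rw [hYeq] at this
        exact absurd hps this
      · exact h1
    exact hns ⟨toFuzzy Y, ltp_of_pltp hpltp, hone⟩

end
end

section
/- The interpretation I = {(p, x), (q, 1−x)} is a fuzzy (1-)stable model of the formula (¬_s q →_r p) ⊗_m (¬_s p →_r q) for every x ∈ [0,1], where ¬_s(x)=1−x, ⊗_m = min, and →_r(a,b) = 1 if a ≤ b and b otherwise. -/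
open unitInterval
open scoped Classical

noncomputable section

theorem stable_pq (x : I) :
    Stable1
      (.conj (fun a b => min a b)
        (.impl rImpl (.neg unitInterval.symm (.atom false)) (.atom true))
        (.impl rImpl (.neg unitInterval.symm (.atom true)) (.atom false)))
      (fun b : Bool => if b then x else unitInterval.symm x) Set.univ := by
  have hsym : unitInterval.symm (unitInterval.symm x) = x := unitInterval.symm_symm x
  have hmin : ∀ a b : I, min a b = 1 → a = 1 ∧ b = 1 := by
    intro a b h
    have := le_min_iff.mp h.ge
    exact ⟨le_antisymm le_one' this.1, le_antisymm le_one' this.2⟩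
  have himp : ∀ a b : I, rImpl a b = 1 → a ≤ b := by
    intro a b h
    by_contra hab
    rw [rImpl, if_neg hab] at h
    exact hab (h ▸ (le_one' : a ≤ 1))
  constructor
  · simp [Stable1, eval, rImpl, hsym]
  · rintro ⟨J, ⟨h0, h1, hne⟩, hval⟩
    simp [eval, reduct, hsym] at hval
    obtain ⟨hB, hC⟩ := hmin _ _ hval
    obtain ⟨hB1, -⟩ := hmin _ _ hB
    obtain ⟨hC1, -⟩ := hmin _ _ hC
    have ht : J true = x := le_antisymm (by simpa using h1 true trivial) (himp _ _ hB1)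
    have hf : J false = unitInterval.symm x :=
      le_antisymm (by simpa using h1 false trivial) (himp _ _ hC1)
    apply hne
    funext b
    cases b <;> simp [ht, hf]

end
end

section
/- Every fuzzy interpretation I = {(p, x)} with x ∈ [0,1] is a fuzzy (1-)stable model of the formula ¬_s p ⊕_l p, where ¬_s(x)=1−x and ⊕_l(a,b)=min(a+b,1), while only I = {(p,0)} is a fuzzy stable model of the tautology p →_r p with →_r(a,b)=1 if a ≤ b, else b. -/
open unitInterval
open scoped Classical

noncomputable section

theorem stable_excluded_middle_and_tautology :
    (∀ x : I,
      Stable1 (.disj lukDisj (.neg unitInterval.symm (.atom ())) (.atom ()))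
        (fun _ : Unit => x) Set.univ) ∧
    (∀ x : I,
      Stable1 (.impl rImpl (.atom ()) (.atom ())) (fun _ : Unit => x) Set.univ
        ↔ x = 0) := by
  have hJeq : ∀ (J : Unit → I) (x : I), (J = fun _ : Unit => x) ↔ J () = x := by
    intro J x
    constructor
    · intro h; rw [h]
    · intro h; funext u; cases u; exact h
  constructor
  · intro x
    constructor
    · show lukDisj (unitInterval.symm x) x = 1
      apply Subtype.ext
      show min (1 - (x:ℝ) + x) 1 = 1
      ring_nf
      simp
    · rintro ⟨J, ⟨-, hle, hne⟩, h1⟩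
      have hle' : J () ≤ x := hle () (Set.mem_univ ())
      simp only [reduct, eval] at h1
      have h2 : lukDisj (unitInterval.symm x) (J ()) = 1 :=
        le_antisymm unitInterval.le_one' (h1 ▸ inf_le_left)
      have h2' : min (1 - (x:ℝ) + (J () : ℝ)) 1 = 1 := by
        have := congrArg Subtype.val h2
        simpa [lukDisj] using this
      have h4 : (1:ℝ) ≤ 1 - (x:ℝ) + (J () : ℝ) := min_eq_right_iff.mp h2'
      have h3 : x ≤ J () := by
        have : (x:ℝ) ≤ (J () : ℝ) := by linarith
        exact_mod_cast this
      exact hne ((hJeq J x).mpr (le_antisymm hle' h3))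
  · intro x
    constructor
    · rintro ⟨-, hnex⟩
      by_contra hx0
      apply hnex
      refine ⟨fun _ => 0, ⟨fun a ha => absurd (Set.mem_univ a) ha,
        fun a _ => unitInterval.nonneg' , fun h => hx0 ((hJeq _ x).mp h).symm⟩, ?_⟩
      show min (rImpl (0:I) (0:I)) (rImpl x x) = 1
      simp [rImpl]
    · rintro rfl
      constructor
      · show rImpl 0 0 = 1
        simp [rImpl]
      · rintro ⟨J, ⟨-, hle, hne⟩, -⟩
        have : J () = 0 := le_antisymm (hle () (Set.mem_univ ())) unitInterval.nonneg'
        exact hne ((hJeq _ _).mpr this)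

end
end
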